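/- Consider the two-dimensional ODE system S' = -r u(t) S φ(t), I' = r u(t) S φ(t) - α I on [0,T], where r, α ≥ 0 and u, φ: [0,T] → [0,1] are measurable. If (S(0), I(0)) ∈ [0,1]² with S(0) + I(0) ≤ 1, then (S(t), I(t)) ∈ [0,1]² and S(t) + I(t) ≤ 1 for all t ∈ [0,T]; moreover S is non-increasing and S(t) = S(0)·exp(-r ∫₀ᵗ u(s)φ(s) ds). -/

import Mathlib

open intervalIntegral

theorem stmt_16 (T r α : ℝ) (hT : 0 ≤ T) (hr : 0 ≤ r) (hα : 0 ≤ α)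
    (u φ S I : ℝ → ℝ)
    (hu : Measurable u) (hφ : Measurable φ)
    (huv : ∀ t, u t ∈ Set.Icc (0 : ℝ) 1) (hφv : ∀ t, φ t ∈ Set.Icc (0 : ℝ) 1)
    (hS : ∀ t ∈ Set.Icc 0 T, HasDerivAt S (-(r * u t * S t * φ t)) t)
    (hI : ∀ t ∈ Set.Icc 0 T, HasDerivAt I (r * u t * S t * φ t - α * I t) t)
    (hS0 : S 0 ∈ Set.Icc (0 : ℝ) 1) (hI0 : I 0 ∈ Set.Icc (0 : ℝ) 1)
    (hsum0 : S 0 + I 0 ≤ 1) :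
    (∀ t ∈ Set.Icc 0 T, S t ∈ Set.Icc (0 : ℝ) 1 ∧ I t ∈ Set.Icc (0 : ℝ) 1 ∧
        S t + I t ≤ 1 ∧
        S t = S 0 * Real.exp (-(r * ∫ s in (0 : ℝ)..t, u s * φ s))) ∧
    AntitoneOn S (Set.Icc 0 T) := by
  have hcontS : ContinuousOn S (Set.Icc 0 T) := fun t ht =>
    (hS t ht).continuousAt.continuousWithinAt
  -- interval integrability of u * φ
  have hint : ∀ a b : ℝ, IntervalIntegrable (fun s => u s * φ s) MeasureTheory.volume a b := by
    intro a b
    rw [intervalIntegrable_iff]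
    apply MeasureTheory.Measure.integrableOn_of_bounded (M := 1)
    · exact measure_Ioc_lt_top.ne
    · exact (hu.mul hφ).aestronglyMeasurable
    · filter_upwards with s
      have h1 := huv s; have h2 := hφv s
      rw [Real.norm_eq_abs, abs_mul, abs_of_nonneg h1.1, abs_of_nonneg h2.1]
      exact mul_le_one₀ h1.2 h2.1 h2.2
  -- the derivative bound used for Gronwall
  have hbd : ∀ x ∈ Set.Icc 0 T, ‖-(r * u x * S x * φ x)‖ ≤ r * ‖S x‖ + 0 := by
    intro x _
    obtain ⟨hu1, hu2⟩ := huv x; obtain ⟨hp1, hp2⟩ := hφv x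
    rw [Real.norm_eq_abs, Real.norm_eq_abs, abs_neg,
      show r * u x * S x * φ x = (r * u x * φ x) * S x from by ring, abs_mul,
      abs_of_nonneg (mul_nonneg (mul_nonneg hr hu1) hp1)]
    nlinarith [mul_nonneg (mul_nonneg (mul_nonneg hr hu1) (abs_nonneg (S x)))
        (sub_nonneg.mpr hp2),
      mul_nonneg (mul_nonneg hr (abs_nonneg (S x))) (sub_nonneg.mpr hu2)]
  -- if S vanishes at 0 it vanishes everywhere
  have hzero : S 0 = 0 → ∀ t ∈ Set.Icc 0 T, S t = 0 := by
    intro h0 t ht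
    have := norm_le_gronwallBound_of_norm_deriv_right_le (δ := 0) (K := r) (ε := 0)
      hcontS (fun x hx => (hS x (Set.Ico_subset_Icc_self hx)).hasDerivWithinAt)
      (by simp [h0]) (fun x hx => hbd x (Set.Ico_subset_Icc_self hx)) t ht
    rw [gronwallBound_ε0_δ0] at this
    simpa using this
  -- if S does not vanish at 0 it never vanishes (time-reversed Gronwall)
  have hne : S 0 ≠ 0 → ∀ t0 ∈ Set.Icc 0 T, S t0 ≠ 0 := by
    intro h0 t0 ht0 habs
    apply h0
    set g : ℝ → ℝ := fun s => S (t0 - s) with hg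
    have hmem : ∀ s ∈ Set.Icc (0:ℝ) t0, t0 - s ∈ Set.Icc 0 T := by
      intro s hs
      constructor <;> [linarith [hs.2]; linarith [hs.1, ht0.2]]
    have hgc : ContinuousOn g (Set.Icc 0 t0) := by
      apply hcontS.comp (Continuous.continuousOn (by continuity))
      intro s hs; exact hmem s hs
    have hgd : ∀ s ∈ Set.Ico (0:ℝ) t0,
        HasDerivAt g ((-(r * u (t0 - s) * S (t0 - s) * φ (t0 - s))) * (-1)) s := by
      intro s hs
      exact (hS (t0 - s) (hmem s (Set.Ico_subset_Icc_self hs))).comp s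
        ((hasDerivAt_id s).const_sub t0)
    have := norm_le_gronwallBound_of_norm_deriv_right_le (δ := 0) (K := r) (ε := 0)
      hgc (fun x hx => (hgd x hx).hasDerivWithinAt)
      (by simp [hg, habs])
      (fun x hx => by
        rw [mul_neg_one, norm_neg]
        exact hbd (t0 - x) (hmem x (Set.Ico_subset_Icc_self hx)))
      t0 ⟨ht0.1, le_refl _⟩
    rw [gronwallBound_ε0_δ0] at this
    have h2 : g t0 = 0 := by simpa using this
    rw [hg] at h2
    simpa using h2
  -- the explicit formula for S
  have hform : ∀ t ∈ Set.Icc 0 T, S t = S 0 * Real.exp (-(r * ∫ s in (0:ℝ)..t, u s * φ s)) := by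
    intro t ht
    rcases eq_or_lt_of_le hS0.1 with h0 | h0
    · rw [hzero h0.symm t ht, ← h0]; ring
    · -- S is positive everywhere
      have hpos : ∀ s ∈ Set.Icc 0 T, 0 < S s := by
        intro s hs
        rcases lt_trichotomy (S s) 0 with h | h | h
        · exfalso
          have hsub : Set.Icc (0:ℝ) s ⊆ Set.Icc 0 T := Set.Icc_subset_Icc le_rfl hs.2
          have := intermediate_value_Icc' hs.1 (hcontS.mono hsub)
          have h0mem : (0:ℝ) ∈ Set.Icc (S s) (S 0) := ⟨h.le, h0.le⟩
          obtain ⟨t0, ht0, ht0' ⟩ := this h0mem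
          exact hne h0.ne' t0 (hsub ht0) ht0'
        · exact absurd h (hne h0.ne' s hs)
        · exact h
      have hsub : Set.Icc (0:ℝ) t ⊆ Set.Icc 0 T := Set.Icc_subset_Icc le_rfl ht.2
      have hlog : ∀ s ∈ Set.uIcc (0:ℝ) t,
          HasDerivAt (fun x => Real.log (S x)) (-(r * (u s * φ s))) s := by
        intro s hs
        rw [Set.uIcc_of_le ht.1] at hs
        have hsT := hsub hs
        have hSne := (hpos s hsT).ne'
        have := (hS s hsT).log hSne
        convert this using 1
        field_simp
      have hint' : IntervalIntegrable (fun s => -(r * (u s * φ s)))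
          MeasureTheory.volume 0 t := (((hint 0 t).const_mul r)).neg
      have hftc := intervalIntegral.integral_eq_sub_of_hasDerivAt hlog hint'
      rw [intervalIntegral.integral_neg, intervalIntegral.integral_const_mul] at hftc
      have hlogeq : Real.log (S t) = Real.log (S 0) + -(r * ∫ s in (0:ℝ)..t, u s * φ s) := by
        linarith
      calc S t = Real.exp (Real.log (S t)) := (Real.exp_log (hpos t ht)).symm
        _ = Real.exp (Real.log (S 0)) * Real.exp (-(r * ∫ s in (0:ℝ)..t, u s * φ s)) := by
              rw [hlogeq, Real.exp_add]
        _ = S 0 * Real.exp (-(r * ∫ s in (0:ℝ)..t, u s * φ s)) := by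
              rw [Real.exp_log h0]
  -- nonnegativity and upper bound for S
  have hSnn : ∀ t ∈ Set.Icc 0 T, 0 ≤ S t := by
    intro t ht
    rw [hform t ht]
    exact mul_nonneg hS0.1 (Real.exp_nonneg _)
  have hSle1 : ∀ t ∈ Set.Icc 0 T, S t ≤ 1 := by
    intro t ht
    rw [hform t ht]
    have hin : (0:ℝ) ≤ ∫ s in (0:ℝ)..t, u s * φ s :=
      intervalIntegral.integral_nonneg ht.1 (fun s _ => mul_nonneg (huv s).1 (hφv s).1)
    have hexp : Real.exp (-(r * ∫ s in (0:ℝ)..t, u s * φ s)) ≤ 1 := by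
      rw [Real.exp_le_one_iff]
      nlinarith
    exact mul_le_one₀ hS0.2 (Real.exp_nonneg _) hexp
  -- nonnegativity of I via J t = I t * exp (α t)
  have hJ : ∀ t ∈ Set.Icc 0 T, HasDerivAt (fun s => I s * Real.exp (α * s))
      (r * u t * S t * φ t * Real.exp (α * t)) t := by
    intro t ht
    have he : HasDerivAt (fun s => Real.exp (α * s)) (Real.exp (α * t) * (α * 1)) t :=
      ((hasDerivAt_id t).const_mul α).exp
    have := (hI t ht).fun_mul he
    exact this.congr_deriv (by ring)
  have hJmono : MonotoneOn (fun s => I s * Real.exp (α * s)) (Set.Icc 0 T) := by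
    apply monotoneOn_of_deriv_nonneg (convex_Icc 0 T)
    · exact fun t ht => (hJ t ht).continuousAt.continuousWithinAt
    · exact fun t ht => ((hJ t (interior_subset ht)).differentiableAt).differentiableWithinAt
    · intro t ht
      rw [(hJ t (interior_subset ht)).deriv]
      have := hSnn t (interior_subset ht)
      have h1 := (huv t).1; have h2 := (hφv t).1
      positivity
  have hInn : ∀ t ∈ Set.Icc 0 T, 0 ≤ I t := by
    intro t ht
    have h0T : (0:ℝ) ∈ Set.Icc 0 T := ⟨le_refl _, hT⟩
    have := hJmono h0T ht ht.1
    simp only [mul_zero, Real.exp_zero, mul_one] at this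
    nlinarith [Real.exp_pos (α * t), hI0.1]
  -- the sum is nonincreasing
  have hN : ∀ t ∈ Set.Icc 0 T, HasDerivAt (fun s => S s + I s) (-(α * I t)) t := by
    intro t ht
    have := (hS t ht).fun_add (hI t ht)
    exact this.congr_deriv (by ring)
  have hNanti : AntitoneOn (fun s => S s + I s) (Set.Icc 0 T) := by
    apply antitoneOn_of_deriv_nonpos (convex_Icc 0 T)
    · exact fun t ht => (hN t ht).continuousAt.continuousWithinAt
    · exact fun t ht => ((hN t (interior_subset ht)).differentiableAt).differentiableWithinAt
    · intro t ht
      rw [(hN t (interior_subset ht)).deriv]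
      have := hInn t (interior_subset ht)
      nlinarith
  have hsum : ∀ t ∈ Set.Icc 0 T, S t + I t ≤ 1 := by
    intro t ht
    have h0T : (0:ℝ) ∈ Set.Icc 0 T := ⟨le_refl _, hT⟩
    have := hNanti h0T ht ht.1
    simpa using le_trans this hsum0
  constructor
  · intro t ht
    refine ⟨⟨hSnn t ht, hSle1 t ht⟩, ⟨hInn t ht, ?_⟩, hsum t ht, hform t ht⟩
    have := hsum t ht
    have := hSnn t ht
    linarith
  · apply antitoneOn_of_deriv_nonpos (convex_Icc 0 T) hcontS
    · exact fun t ht => ((hS t (interior_subset ht)).differentiableAt).differentiableWithinAt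
    · intro t ht
      rw [(hS t (interior_subset ht)).deriv]
      have hs := hSnn t (interior_subset ht)
      have : 0 ≤ r * u t * S t * φ t :=
        mul_nonneg (mul_nonneg (mul_nonneg hr (huv t).1) hs) (hφv t).1
      linarith
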